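/- Let n ≥ 1, let W be an n×n real doubly stochastic matrix such that every entry of W^n is strictly positive, and let x : ℕ → ℝ^n evolve according to x(k+1) = W(x(k) + θ(k)) with ‖θ(k)‖_∞ ≤ α ρ^k for all k, where α > 0 and ρ ∈ [0,1). Then lim_{k→∞} (max_i x_i(k) − min_i x_i(k)) = 0; that is, all node states asymptotically agree even though the total noise need not be zero. -/
import Mathlib

open Filter Finset

namespace SCDAAux

variable {n : ℕ}

/-- Upper bound on each entry of `A.mulVec v` for a row-stochastic matrix with entries ≥ e. -/
lemma mulVec_upper [NeZero n] (A : Matrix (Fin n) (Fin n) ℝ) (e : ℝ) (he : 0 ≤ e)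
    (hA : ∀ i j, e ≤ A i j) (hrow : ∀ i, ∑ j, A i j = 1) (v : Fin n → ℝ) (i : Fin n) :
    A.mulVec v i ≤ (1 - e) * (⨆ j, v j) + e * (⨅ j, v j) := by
  haveI : Nonempty (Fin n) := ⟨⟨0, Nat.pos_of_ne_zero (NeZero.ne n)⟩⟩
  set M := ⨆ j, v j with hM
  set m := ⨅ j, v j with hm
  have hvM : ∀ j, v j ≤ M := fun j => le_ciSup (Set.Finite.bddAbove (Set.finite_range v)) j
  have hmv : ∀ j, m ≤ v j := fun j => ciInf_le (Set.Finite.bddBelow (Set.finite_range v)) j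
  obtain ⟨j0, hj0⟩ := Finite.exists_min v
  have hj0m : v j0 ≤ m := le_ciInf hj0
  have hmM : m ≤ M := le_trans (hmv j0) (hvM j0)
  have hsplit : A.mulVec v i = A i j0 * v j0 + ∑ j ∈ Finset.univ.erase j0, A i j * v j := by
    rw [Matrix.mulVec, dotProduct]
    exact (Finset.add_sum_erase _ (fun j => A i j * v j) (Finset.mem_univ j0)).symm
  have hrest : ∑ j ∈ Finset.univ.erase j0, A i j * v j ≤ (1 - A i j0) * M := by
    have h1 : ∑ j ∈ Finset.univ.erase j0, A i j * v j ≤ ∑ j ∈ Finset.univ.erase j0, A i j * M :=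
      Finset.sum_le_sum fun j _ => mul_le_mul_of_nonneg_left (hvM j) (le_trans he (hA i j))
    have h2 : ∑ j ∈ Finset.univ.erase j0, A i j = 1 - A i j0 := by
      have := Finset.sum_erase_add Finset.univ (fun j => A i j) (Finset.mem_univ j0)
      rw [hrow i] at this; linarith
    calc ∑ j ∈ Finset.univ.erase j0, A i j * v j ≤ ∑ j ∈ Finset.univ.erase j0, A i j * M := h1
      _ = (1 - A i j0) * M := by rw [← Finset.sum_mul, h2]
  have hAe := hA i j0
  have hterm : A i j0 * v j0 ≤ A i j0 * m :=
    mul_le_mul_of_nonneg_left hj0m (le_trans he hAe)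
  rw [hsplit]
  nlinarith [mul_le_mul_of_nonneg_right hAe (sub_nonneg.mpr hmM)]

/-- Lower bound, dual of `mulVec_upper`. -/
lemma mulVec_lower [NeZero n] (A : Matrix (Fin n) (Fin n) ℝ) (e : ℝ) (he : 0 ≤ e)
    (hA : ∀ i j, e ≤ A i j) (hrow : ∀ i, ∑ j, A i j = 1) (v : Fin n → ℝ) (i : Fin n) :
    (1 - e) * (⨅ j, v j) + e * (⨆ j, v j) ≤ A.mulVec v i := by
  haveI : Nonempty (Fin n) := ⟨⟨0, Nat.pos_of_ne_zero (NeZero.ne n)⟩⟩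
  set M := ⨆ j, v j with hM
  set m := ⨅ j, v j with hm
  have hvM : ∀ j, v j ≤ M := fun j => le_ciSup (Set.Finite.bddAbove (Set.finite_range v)) j
  have hmv : ∀ j, m ≤ v j := fun j => ciInf_le (Set.Finite.bddBelow (Set.finite_range v)) j
  obtain ⟨j1, hj1⟩ := Finite.exists_min (fun j => -v j)
  have hj1M : M ≤ v j1 := ciSup_le fun j => by have := hj1 j; simp at this; linarith
  have hmM : m ≤ M := le_trans (hmv j1) (hvM j1)
  have hsplit : A.mulVec v i = A i j1 * v j1 + ∑ j ∈ Finset.univ.erase j1, A i j * v j := by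
    rw [Matrix.mulVec, dotProduct]
    exact (Finset.add_sum_erase _ (fun j => A i j * v j) (Finset.mem_univ j1)).symm
  have hrest : (1 - A i j1) * m ≤ ∑ j ∈ Finset.univ.erase j1, A i j * v j := by
    have h1 : ∑ j ∈ Finset.univ.erase j1, A i j * m ≤ ∑ j ∈ Finset.univ.erase j1, A i j * v j :=
      Finset.sum_le_sum fun j _ => mul_le_mul_of_nonneg_left (hmv j) (le_trans he (hA i j))
    have h2 : ∑ j ∈ Finset.univ.erase j1, A i j = 1 - A i j1 := by
      have := Finset.sum_erase_add Finset.univ (fun j => A i j) (Finset.mem_univ j1)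
      rw [hrow i] at this; linarith
    calc (1 - A i j1) * m = ∑ j ∈ Finset.univ.erase j1, A i j * m := by rw [← Finset.sum_mul, h2]
      _ ≤ _ := h1
  have hAe := hA i j1
  have hterm : A i j1 * M ≤ A i j1 * v j1 :=
    mul_le_mul_of_nonneg_left hj1M (le_trans he hAe)
  rw [hsplit]
  nlinarith [mul_le_mul_of_nonneg_right hAe (sub_nonneg.mpr hmM)]

/-- Spread contraction for matrices with entries ≥ e. -/
lemma spread_mulVec [NeZero n] (A : Matrix (Fin n) (Fin n) ℝ) (e : ℝ) (he : 0 ≤ e)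
    (hA : ∀ i j, e ≤ A i j) (hrow : ∀ i, ∑ j, A i j = 1) (v : Fin n → ℝ) :
    (⨆ i, A.mulVec v i) - (⨅ i, A.mulVec v i)
      ≤ (1 - 2 * e) * ((⨆ i, v i) - ⨅ i, v i) := by
  haveI : Nonempty (Fin n) := ⟨⟨0, Nat.pos_of_ne_zero (NeZero.ne n)⟩⟩
  have h1 : (⨆ i, A.mulVec v i) ≤ (1 - e) * (⨆ j, v j) + e * (⨅ j, v j) :=
    ciSup_le fun i => mulVec_upper A e he hA hrow v i
  have h2 : (1 - e) * (⨅ j, v j) + e * (⨆ j, v j) ≤ ⨅ i, A.mulVec v i :=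
    le_ciInf fun i => mulVec_lower A e he hA hrow v i
  linarith

/-- Spread of a sum. -/
lemma spread_add [NeZero n] (v w : Fin n → ℝ) :
    (⨆ i, (v + w) i) - (⨅ i, (v + w) i) ≤ ((⨆ i, v i) - ⨅ i, v i) + 2 * ‖w‖ := by
  haveI : Nonempty (Fin n) := ⟨⟨0, Nat.pos_of_ne_zero (NeZero.ne n)⟩⟩
  have h1 : (⨆ i, (v + w) i) ≤ (⨆ i, v i) + ‖w‖ := by
    refine ciSup_le fun i => ?_
    have hv : v i ≤ ⨆ j, v j := le_ciSup (Set.Finite.bddAbove (Set.finite_range v)) i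
    have hw : w i ≤ ‖w‖ := le_trans (le_abs_self _) (norm_le_pi_norm w i)
    simpa using add_le_add hv hw
  have h2 : (⨅ i, v i) - ‖w‖ ≤ ⨅ i, (v + w) i := by
    refine le_ciInf fun i => ?_
    have hv : ⨅ j, v j ≤ v i := ciInf_le (Set.Finite.bddBelow (Set.finite_range v)) i
    have hw : -‖w‖ ≤ w i := neg_le_of_abs_le (norm_le_pi_norm w i)
    have : (⨅ j, v j) + -‖w‖ ≤ v i + w i := add_le_add hv hw
    simpa [sub_eq_add_neg] using this
  linarith

/-- Row-stochastic nonneg matrices do not increase the sup norm. -/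
lemma norm_mulVec_le (A : Matrix (Fin n) (Fin n) ℝ) (hA : ∀ i j, 0 ≤ A i j)
    (hrow : ∀ i, ∑ j, A i j = 1) (u : Fin n → ℝ) : ‖A.mulVec u‖ ≤ ‖u‖ := by
  rw [pi_norm_le_iff_of_nonneg (norm_nonneg u)]
  intro i
  have : |∑ j, A i j * u j| ≤ ∑ j, A i j * ‖u‖ := by
    refine le_trans (Finset.abs_sum_le_sum_abs _ _) (Finset.sum_le_sum fun j _ => ?_)
    rw [abs_mul, abs_of_nonneg (hA i j)]
    have hju : |u j| ≤ ‖u‖ := by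
      have := norm_le_pi_norm u j
      rwa [Real.norm_eq_abs] at this
    exact mul_le_mul_of_nonneg_left hju (hA i j)
  simpa [Matrix.mulVec, dotProduct, ← Finset.sum_mul, hrow i, Real.norm_eq_abs] using this

end SCDAAux

open SCDAAux

/-- All node states asymptotically agree: under exponentially decaying noise,
the spread `max_i x_i(k) − min_i x_i(k)` of the noisy consensus iteration
converges to zero. -/
theorem scda_spread_tendsto_zero
    (n : ℕ) (hn : 1 ≤ n) (W : Matrix (Fin n) (Fin n) ℝ)
    (hW_nonneg : ∀ i j, 0 ≤ W i j)
    (hW_row : ∀ i, ∑ j, W i j = 1)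
    (hW_col : ∀ j, ∑ i, W i j = 1)
    (hWn_pos : ∀ i j, 0 < (W ^ n) i j)
    (x θ : ℕ → Fin n → ℝ)
    (hdyn : ∀ k, x (k + 1) = W.mulVec (x k + θ k))
    (α ρ : ℝ) (hα : 0 < α) (hρ0 : 0 ≤ ρ) (hρ1 : ρ < 1)
    (hθ : ∀ k, ‖θ k‖ ≤ α * ρ ^ k) :
    Tendsto (fun k => (⨆ i, x k i) - ⨅ i, x k i) atTop (nhds 0) := by
  haveI : NeZero n := ⟨Nat.one_le_iff_ne_zero.mp hn⟩
  haveI : Nonempty (Fin n) := ⟨⟨0, hn⟩⟩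
  set S : ℕ → ℝ := fun k => (⨆ i, x k i) - ⨅ i, x k i with hS
  -- nonnegativity of the spread
  have hS0 : ∀ k, 0 ≤ S k := by
    intro k
    have h1 : (⨅ i, x k i) ≤ x k ⟨0, hn⟩ :=
      ciInf_le (Set.Finite.bddBelow (Set.finite_range _)) _
    have h2 : x k ⟨0, hn⟩ ≤ ⨆ i, x k i :=
      le_ciSup (Set.Finite.bddAbove (Set.finite_range _)) _
    simp only [hS]; linarith
  -- powers of W are row-stochastic with nonneg entries
  have hpow_nonneg : ∀ m i j, 0 ≤ (W ^ m) i j := by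
    intro m
    induction m with
    | zero => intro i j; simp [Matrix.one_apply]; positivity
    | succ m ih =>
      intro i j
      rw [pow_succ, Matrix.mul_apply]
      exact Finset.sum_nonneg fun l _ => mul_nonneg (ih i l) (hW_nonneg l j)
  have hpow_row : ∀ m i, ∑ j, (W ^ m) i j = 1 := by
    intro m
    induction m with
    | zero => intro i; simp [Matrix.one_apply]
    | succ m ih =>
      intro i
      simp only [pow_succ, Matrix.mul_apply]
      rw [Finset.sum_comm]
      calc ∑ l, ∑ j, (W ^ m) i l * W l j = ∑ l, (W ^ m) i l * ∑ j, W l j := by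
            simp [Finset.mul_sum]
        _ = 1 := by simp [hW_row, ih i]
  -- minimal entry of W ^ n
  obtain ⟨p0, hp0⟩ := Finite.exists_min (fun p : Fin n × Fin n => (W ^ n) p.1 p.2)
  set e : ℝ := min ((W ^ n) p0.1 p0.2) (1 / 2) with he_def
  have he_pos : 0 < e := lt_min (hWn_pos _ _) (by norm_num)
  have he_le : ∀ i j, e ≤ (W ^ n) i j := fun i j =>
    le_trans (min_le_left _ _) (hp0 (i, j))
  set q : ℝ := 1 - 2 * e with hq_def
  have hq0 : 0 ≤ q := by
    have : e ≤ 1 / 2 := min_le_right _ _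
    simp only [hq_def]; linarith
  have hq1 : q < 1 := by simp only [hq_def]; linarith
  -- trajectory decomposition over m steps
  have hdecomp : ∀ k m, ∃ w : Fin n → ℝ,
      x (k + m) = (W ^ m).mulVec (x k) + w ∧ ‖w‖ ≤ m * (α * ρ ^ k) := by
    intro k m
    induction m with
    | zero =>
      refine ⟨0, by simp [Matrix.mulVec], by simp⟩
    | succ m ih =>
      obtain ⟨w, hw, hwn⟩ := ih
      refine ⟨W.mulVec (w + θ (k + m)), ?_, ?_⟩
      · have : x (k + (m + 1)) = W.mulVec (x (k + m) + θ (k + m)) := by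
          rw [← hdyn (k + m)]; ring_nf
        rw [this, hw]
        rw [show (W ^ m).mulVec (x k) + w + θ (k + m)
              = (W ^ m).mulVec (x k) + (w + θ (k + m)) by ring]
        rw [Matrix.mulVec_add, Matrix.mulVec_mulVec, ← pow_succ']
      · have h1 : ‖W.mulVec (w + θ (k + m))‖ ≤ ‖w + θ (k + m)‖ :=
          norm_mulVec_le W hW_nonneg hW_row _
        have h2 : ‖w + θ (k + m)‖ ≤ ‖w‖ + ‖θ (k + m)‖ := norm_add_le _ _
        have h3 : ‖θ (k + m)‖ ≤ α * ρ ^ k := by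
          refine le_trans (hθ (k + m)) ?_
          rw [pow_add]
          calc α * (ρ ^ k * ρ ^ m) = (α * ρ ^ k) * ρ ^ m := by ring
            _ ≤ (α * ρ ^ k) * 1 := by
                refine mul_le_mul_of_nonneg_left (pow_le_one₀ hρ0 hρ1.le) ?_
                positivity
            _ = α * ρ ^ k := by ring
        push_cast
        nlinarith [norm_nonneg w]
  -- key recursion
  have hrec : ∀ k, S (k + n) ≤ q * S k + (2 * n * α) * ρ ^ k := by
    intro k
    obtain ⟨w, hw, hwn⟩ := hdecomp k n
    have h1 : S (k + n) ≤ ((⨆ i, (W ^ n).mulVec (x k) i) - ⨅ i, (W ^ n).mulVec (x k) i)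
        + 2 * ‖w‖ := by
      simp only [hS, hw]
      exact spread_add _ _
    have h2 : (⨆ i, (W ^ n).mulVec (x k) i) - (⨅ i, (W ^ n).mulVec (x k) i)
        ≤ (1 - 2 * e) * S k :=
      spread_mulVec (W ^ n) e he_pos.le he_le (hpow_row n) (x k)
    have := hwn
    simp only [hq_def]
    nlinarith [hS0 k]
  -- geometric envelope
  set q' : ℝ := (1 + q) / 2 with hq'_def
  have hq'q : q < q' := by simp only [hq'_def]; linarith
  have hq'1 : q' < 1 := by simp only [hq'_def]; linarith
  have hq'pos : 0 < q' := by simp only [hq'_def]; linarith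
  set ρ' : ℝ := q' ^ ((n : ℝ)⁻¹) with hρ'_def
  have hρ'pos : 0 < ρ' := Real.rpow_pos_of_pos hq'pos _
  have hρ'1 : ρ' < 1 := Real.rpow_lt_one hq'pos.le hq'1 (by positivity)
  have hρ'n : ρ' ^ n = q' := Real.rpow_inv_natCast_pow hq'pos.le (Nat.one_le_iff_ne_zero.mp hn)
  set μ : ℝ := max ρ ρ' with hμ_def
  have hμpos : 0 < μ := lt_of_lt_of_le hρ'pos (le_max_right _ _)
  have hμ1 : μ < 1 := max_lt hρ1 hρ'1
  have hρμ : ρ ≤ μ := le_max_left _ _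
  have hμn : q' ≤ μ ^ n := by
    rw [← hρ'n]
    exact pow_le_pow_left₀ hρ'pos.le (le_max_right _ _) n
  set C : ℝ := 2 * n * α with hC_def
  have hC0 : 0 ≤ C := by positivity
  set M0 : ℝ := (Finset.range n).sup' (by simp; omega) S with hM0_def
  have hM0 : ∀ k < n, S k ≤ M0 := fun k hk => Finset.le_sup' S (Finset.mem_range.mpr hk)
  set D : ℝ := max (M0 / μ ^ (n - 1)) (C / (q' - q)) with hD_def
  have hD0 : 0 ≤ D :=
    le_trans (div_nonneg hC0 (by linarith)) (le_max_right _ _)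
  have hDC : C ≤ D * (q' - q) := by
    have h1 : C / (q' - q) ≤ D := le_max_right _ _
    calc C = (C / (q' - q)) * (q' - q) := by
          rw [div_mul_cancel₀ _ (ne_of_gt (by linarith : (0:ℝ) < q' - q))]
      _ ≤ D * (q' - q) := mul_le_mul_of_nonneg_right h1 (by linarith)
  -- main bound by strong induction
  have claim : ∀ k, S k ≤ D * μ ^ k := by
    intro k
    induction k using Nat.strong_induction_on with
    | _ k ih =>
      rcases lt_or_ge k n with hk | hk
      · have h1 : S k ≤ M0 := hM0 k hk
        have h2 : M0 ≤ (M0 / μ ^ (n - 1)) * μ ^ (n - 1) := by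
          rw [div_mul_cancel₀]
          positivity
        have h3 : (M0 / μ ^ (n - 1)) * μ ^ (n - 1) ≤ D * μ ^ (n - 1) :=
          mul_le_mul_of_nonneg_right (le_max_left _ _) (by positivity)
        have h4 : D * μ ^ (n - 1) ≤ D * μ ^ k :=
          mul_le_mul_of_nonneg_left
            (pow_le_pow_of_le_one hμpos.le hμ1.le (by omega)) hD0
        linarith
      · obtain ⟨k', rfl⟩ : ∃ k', k = k' + n := ⟨k - n, by omega⟩
        have ihk : S k' ≤ D * μ ^ k' := ih k' (by omega)
        have hρμk : ρ ^ k' ≤ μ ^ k' := pow_le_pow_left₀ hρ0 hρμ k'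
        calc S (k' + n) ≤ q * S k' + C * ρ ^ k' := hrec k'
          _ ≤ q * (D * μ ^ k') + C * μ ^ k' := by
              refine add_le_add (mul_le_mul_of_nonneg_left ihk hq0)
                (mul_le_mul_of_nonneg_left hρμk hC0)
          _ = (q * D + C) * μ ^ k' := by ring
          _ ≤ (D * μ ^ n) * μ ^ k' := by
              refine mul_le_mul_of_nonneg_right ?_ (by positivity)
              have : D * q' ≤ D * μ ^ n := mul_le_mul_of_nonneg_left hμn hD0
              nlinarith
          _ = D * μ ^ (k' + n) := by rw [pow_add]; ring
  -- conclude by squeezing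
  have hlim : Tendsto (fun k => D * μ ^ k) atTop (nhds 0) := by
    have := (tendsto_pow_atTop_nhds_zero_of_lt_one hμpos.le hμ1).const_mul D
    simpa using this
  exact squeeze_zero hS0 claim hlim
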